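/- Let m be a non-negative integer and let A, B be non-zero complex numbers satisfying Σ_{k≥0} m!·(AB)^k/((k+m)!) = 1. Let j, l be integers with l ≥ j ≥ 2, and let C_0, …, C_j be defined by ∏_{i=1}^j (l+k+m−j+i) = C_0 + Σ_{i=1}^j C_i ∏_{λ=0}^{i−1}(k+m−λ). Define C(j,l) = Σ_{k≥0} (m!/((k+m)!)) · ((l+k+m)!/((k+l−j+m)!)) · A^k B^{l+k−j} − Σ_{k=0}^{j} (m!/((k+m)!)) · ((j+m)!/((k+l−j+m)!)) · ((l+m)!/((j−k+m)!)) · A^k B^{l+k−j}. Then C(j,l) = Σ_{k=1}^{j−1} Q_k A^k B^{l+k−j} − Σ_{i=0}^{j−2} C_i A^i B^{l+i−j} · (Σ_{k=1}^{j−i−1} m!(AB)^k/((k+m)!)), where Q_k = (m!/((k+m)!)) · [(l+k+m)!/((k+l−j+m)!) − ((j+m)!/((k+l−j+m)!)) · ((l+m)!/((j−k+m)!))]. -/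

import Mathlib

open Finset

section stmt7aux

open Polynomial

lemma stmt7_helper1 (a : ℕ) : ∀ b : ℕ,
    (a.factorial : ℂ) * ∏ i ∈ Icc 1 b, ((a : ℂ) + i) = ((a + b).factorial : ℂ) := by
  intro b
  induction b with
  | zero => simp
  | succ n ih =>
      rw [Finset.prod_Icc_succ_top (Nat.le_add_left 1 n), ← mul_assoc, ih,
        show a + (n+1) = (a+n)+1 from rfl, Nat.factorial_succ]
      push_cast
      ring

lemma stmt7_helper2 (n : ℕ) : ∀ i : ℕ, i ≤ n →
    ((n - i).factorial : ℂ) * ∏ x ∈ range i, ((n : ℂ) - x) = (n.factorial : ℂ) := by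
  intro i
  induction i with
  | zero => simp
  | succ i ih =>
      intro h
      rw [Finset.prod_range_succ, ← mul_assoc]
      have h1 : i ≤ n := by omega
      have h2 : n - i = (n - (i+1)) + 1 := by omega
      have h3 : ((n : ℂ) - i) = ((n - i : ℕ) : ℂ) := by
        push_cast [Nat.cast_sub h1]; ring
      rw [mul_right_comm, h3]
      rw [show ((n - (i+1)).factorial : ℂ) * ((n - i : ℕ) : ℂ) = ((n-i).factorial : ℂ) by
        rw [h2, Nat.factorial_succ]; push_cast [← h2]; ring]
      exact ih h1

lemma stmt7_Cjone (m j l : ℕ) (hj : 2 ≤ j) (C : ℕ → ℂ)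
    (hC : ∀ k : ℕ, ∏ i ∈ Icc 1 j, ((l : ℂ) + k + m - j + i)
      = C 0 + ∑ i ∈ Icc 1 j, C i * ∏ x ∈ range i, ((k : ℂ) + m - x)) : C j = 1 := by
  set p : Polynomial ℂ := ∏ i ∈ Icc 1 j, (X + Polynomial.C ((l:ℂ) + m - j + i)) with hp
  set q : Polynomial ℂ := Polynomial.C (C 0)
      + ∑ i ∈ Icc 1 j, Polynomial.C (C i) * ∏ x ∈ range i, (X + Polynomial.C ((m:ℂ) - x)) with hq
  have heval : ∀ k : ℕ, (p - q).eval (k : ℂ) = 0 := by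
    intro k
    have h := hC k
    simp only [hp, hq, eval_sub, eval_prod, eval_add, eval_finset_sum, eval_mul, eval_X, eval_C,
      sub_eq_zero]
    calc ∏ i ∈ Icc 1 j, ((k:ℂ) + ((l:ℂ) + m - j + i))
        = ∏ i ∈ Icc 1 j, ((l : ℂ) + k + m - j + i) := by
          exact Finset.prod_congr rfl (fun i _ => by ring)
      _ = C 0 + ∑ i ∈ Icc 1 j, C i * ∏ x ∈ range i, ((k : ℂ) + m - x) := h
      _ = C 0 + ∑ i ∈ Icc 1 j, C i * ∏ x ∈ range i, ((k:ℂ) + ((m:ℂ) - x)) := by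
          refine congrArg _ (Finset.sum_congr rfl (fun i _ => ?_))
          exact congrArg _ (Finset.prod_congr rfl (fun x _ => by ring))
  have hpq : p = q := by
    have : p - q = 0 := by
      apply Polynomial.eq_zero_of_infinite_isRoot
      apply Set.Infinite.mono (s := Set.range (Nat.cast : ℕ → ℂ))
      · rintro x ⟨k, rfl⟩; exact heval k
      · exact Set.infinite_range_of_injective Nat.cast_injective
    linear_combination (norm := ring_nf) this
  have hpm : p.Monic := monic_prod_of_monic _ _ (fun i _ => monic_X_add_C _)
  have hpd : p.natDegree = j := by
    rw [hp, natDegree_prod_of_monic _ _ (fun i _ => monic_X_add_C _)]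
    simp only [natDegree_X_add_C, Finset.sum_const, Nat.card_Icc, smul_eq_mul, mul_one]
    omega
  have hpc : p.coeff j = 1 := by rw [← hpd]; exact hpm.coeff_natDegree
  have hmon : ∀ i : ℕ, (∏ x ∈ range i, (X + Polynomial.C ((m:ℂ) - x))).Monic :=
    fun i => monic_prod_of_monic _ _ (fun x _ => monic_X_add_C _)
  have hdeg : ∀ i : ℕ, (∏ x ∈ range i, (X + Polynomial.C ((m:ℂ) - x))).natDegree = i := by
    intro i
    rw [natDegree_prod_of_monic _ _ (fun x _ => monic_X_add_C _)]
    simp only [natDegree_X_add_C, Finset.sum_const, Finset.card_range, smul_eq_mul, mul_one]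
  have hqc : q.coeff j = C j := by
    rw [hq, coeff_add, coeff_C, if_neg (by omega), finset_sum_coeff]
    rw [Finset.sum_eq_single j]
    · have h1 := (hmon j).coeff_natDegree
      rw [hdeg j] at h1
      rw [coeff_C_mul, h1, mul_one, zero_add]
    · intro i hi hne
      rw [coeff_C_mul, coeff_eq_zero_of_natDegree_lt, mul_zero]
      rw [hdeg i]; simp at hi; omega
    · intro h; simp at h; omega
  rw [← hqc, ← hpq, hpc]

lemma stmt7_shift (m : ℕ) (A B : ℂ)
    (j l : ℕ) (hj : 2 ≤ j) (hl : j ≤ l) (C : ℕ → ℂ)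
    (hC : ∀ k : ℕ, ∏ i ∈ Finset.Icc 1 j, ((l : ℂ) + k + m - j + i)
      = C 0 + ∑ i ∈ Finset.Icc 1 j, C i * ∏ x ∈ Finset.range i, ((k : ℂ) + m - x))
    (k : ℕ) :
    ((Nat.factorial m : ℂ) / (Nat.factorial ((k+j) + m) : ℂ)) *
        ((Nat.factorial (l + (k+j) + m) : ℂ) / (Nat.factorial ((k+j) + l - j + m) : ℂ)) *
        A ^ (k+j) * B ^ (l + (k+j) - j)
      = ∑ i ∈ range (j+1), C i * A ^ i * B ^ (l + i - j) *
          ((Nat.factorial m : ℂ) * (A * B) ^ (k + (j - i)) / (Nat.factorial ((k + (j - i)) + m) : ℂ)) := by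
  have hfac : ∀ n : ℕ, ((Nat.factorial n : ℂ)) ≠ 0 :=
    fun n => Nat.cast_ne_zero.2 (Nat.factorial_ne_zero n)
  have e1 : (k+j) + l - j + m = k + l + m := by omega
  have e2 : l + (k+j) - j = l + k := by omega
  have e3 : l + (k+j) + m = l + k + m + j := by omega
  rw [e1, e2, e3]
  have hprod1 : ∏ i ∈ Icc 1 j, ((l : ℂ) + ((k+j : ℕ) : ℂ) + m - j + i)
      = ((Nat.factorial (l+k+m+j) : ℂ)) / ((Nat.factorial (l+k+m) : ℂ)) := by
    rw [eq_div_iff (hfac _), mul_comm, ← stmt7_helper1 (l+k+m) j]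
    congr 1
    refine Finset.prod_congr rfl fun i _ => ?_
    push_cast; ring
  have hprod2 : ∀ i ∈ Icc 1 j, ∏ x ∈ range i, (((k+j : ℕ) : ℂ) + m - x)
      = ((Nat.factorial (k+j+m) : ℂ)) / ((Nat.factorial (k+j-i+m) : ℂ)) := by
    intro i hi
    simp only [mem_Icc] at hi
    have h4 : k + j + m - i = k + j - i + m := by omega
    have h5 := stmt7_helper2 (k+j+m) i (by omega)
    rw [h4] at h5
    rw [eq_div_iff (hfac _), mul_comm, ← h5]
    congr 1
    refine Finset.prod_congr rfl fun x _ => ?_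
    push_cast; ring
  have key : ((Nat.factorial (l+k+m+j) : ℂ)) / ((Nat.factorial (l+k+m) : ℂ))
      = C 0 + ∑ i ∈ Icc 1 j, C i * ((Nat.factorial (k+j+m) : ℂ) / (Nat.factorial (k+j-i+m) : ℂ)) := by
    rw [← hprod1, hC (k+j)]
    exact congrArg _ (Finset.sum_congr rfl fun i hi => by rw [hprod2 i hi])
  have hterm : ∀ i ∈ range (j+1),
      C i * A ^ i * B ^ (l + i - j) *
        ((Nat.factorial m : ℂ) * (A * B) ^ (k + (j - i)) / (Nat.factorial ((k + (j - i)) + m) : ℂ))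
      = C i * ((Nat.factorial m : ℂ) / (Nat.factorial (k+j-i+m) : ℂ)) * (A ^ (k+j) * B ^ (l+k)) := by
    intro i hi
    simp only [mem_range] at hi
    have hij : i ≤ j := by omega
    have hA1 : A ^ i * (A * B) ^ (k + (j - i)) = A ^ (k+j) * B ^ (k + (j - i)) := by
      rw [mul_pow, ← mul_assoc, ← pow_add]
      congr 2
      omega
    have hB1 : B ^ (l + i - j) * B ^ (k + (j - i)) = B ^ (l + k) := by
      rw [← pow_add]
      congr 1
      omega
    have e6 : k + (j - i) + m = k + j - i + m := by omega
    rw [e6]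
    calc C i * A ^ i * B ^ (l + i - j) *
          ((Nat.factorial m : ℂ) * (A * B) ^ (k + (j - i)) / (Nat.factorial (k + j - i + m) : ℂ))
        = (C i * (Nat.factorial m : ℂ) * (A ^ i * (A * B) ^ (k + (j - i))) * B ^ (l + i - j))
            / (Nat.factorial (k + j - i + m) : ℂ) := by ring
      _ = (C i * (Nat.factorial m : ℂ) * (A ^ (k+j) * B ^ (k + (j - i))) * B ^ (l + i - j))
            / (Nat.factorial (k + j - i + m) : ℂ) := by rw [hA1]
      _ = (C i * (Nat.factorial m : ℂ) * A ^ (k+j) * (B ^ (l + i - j) * B ^ (k + (j - i))))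
            / (Nat.factorial (k + j - i + m) : ℂ) := by ring
      _ = (C i * (Nat.factorial m : ℂ) * A ^ (k+j) * B ^ (l + k))
            / (Nat.factorial (k + j - i + m) : ℂ) := by rw [hB1]
      _ = C i * ((Nat.factorial m : ℂ) / (Nat.factorial (k+j-i+m) : ℂ)) * (A ^ (k+j) * B ^ (l+k)) := by
          ring
  rw [Finset.sum_congr rfl hterm, ← Finset.sum_mul]
  have main : ((Nat.factorial m : ℂ) / (Nat.factorial (k+j+m) : ℂ)) *
      ((Nat.factorial (l+k+m+j) : ℂ) / (Nat.factorial (k+l+m) : ℂ))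
      = ∑ i ∈ range (j+1), C i * ((Nat.factorial m : ℂ) / (Nat.factorial (k+j-i+m) : ℂ)) := by
    have e7 : k + l + m = l + k + m := by omega
    rw [e7]
    rw [Finset.range_eq_Ico, Finset.sum_eq_sum_Ico_succ_bot (by omega)]
    rw [show Finset.Ico 1 (j+1) = Finset.Icc 1 j from rfl]
    have expand := congrArg (fun z => z * ((Nat.factorial m : ℂ) / (Nat.factorial (k+j+m) : ℂ))) key
    rw [add_mul, Finset.sum_mul] at expand
    calc (Nat.factorial m : ℂ) / (Nat.factorial (k+j+m) : ℂ) *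
        ((Nat.factorial (l+k+m+j) : ℂ) / (Nat.factorial (l+k+m) : ℂ))
        = ((Nat.factorial (l+k+m+j) : ℂ) / (Nat.factorial (l+k+m) : ℂ)) *
          ((Nat.factorial m : ℂ) / (Nat.factorial (k+j+m) : ℂ)) := by ring
      _ = C 0 * ((Nat.factorial m : ℂ) / (Nat.factorial (k+j+m) : ℂ))
          + ∑ i ∈ Icc 1 j, C i * ((Nat.factorial (k+j+m) : ℂ) / (Nat.factorial (k+j-i+m) : ℂ))
              * ((Nat.factorial m : ℂ) / (Nat.factorial (k+j+m) : ℂ)) := expand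
      _ = C 0 * ((Nat.factorial m : ℂ) / (Nat.factorial (k+j-0+m) : ℂ))
          + ∑ i ∈ Icc 1 j, C i * ((Nat.factorial m : ℂ) / (Nat.factorial (k+j-i+m) : ℂ)) := by
          rw [show k+j-0+m = k+j+m by omega]
          refine congrArg _ (Finset.sum_congr rfl fun i hi => ?_)
          rw [mul_assoc, div_mul_div_comm,
            mul_comm ((Nat.factorial (k+j-i+m) : ℂ)) ((Nat.factorial (k+j+m) : ℂ)),
            mul_div_mul_left _ _ (hfac (k+j+m))]
  calc ((Nat.factorial m : ℂ) / (Nat.factorial ((k+j) + m) : ℂ)) *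
        ((Nat.factorial (l+k+m+j) : ℂ) / (Nat.factorial (k+l+m) : ℂ)) * A ^ (k+j) * B ^ (l+k)
      = (((Nat.factorial m : ℂ) / (Nat.factorial (k+j+m) : ℂ)) *
        ((Nat.factorial (l+k+m+j) : ℂ) / (Nat.factorial (k+l+m) : ℂ))) * (A ^ (k+j) * B ^ (l+k)) := by
        ring
    _ = (∑ i ∈ range (j+1), C i * ((Nat.factorial m : ℂ) / (Nat.factorial (k+j-i+m) : ℂ)))
        * (A ^ (k+j) * B ^ (l+k)) := by rw [main]

end stmt7aux

theorem stmt7 (m : ℕ) (A B : ℂ) (hA : A ≠ 0) (hB : B ≠ 0)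
    (hsum : ∑' k : ℕ, (Nat.factorial m : ℂ) * (A * B) ^ k / (Nat.factorial (k + m) : ℂ) = 1)
    (j l : ℕ) (hj : 2 ≤ j) (hl : j ≤ l) (C : ℕ → ℂ)
    (hC : ∀ k : ℕ, ∏ i ∈ Finset.Icc 1 j, ((l : ℂ) + k + m - j + i)
      = C 0 + ∑ i ∈ Finset.Icc 1 j, C i * ∏ x ∈ Finset.range i, ((k : ℂ) + m - x)) :
    (∑' k : ℕ, ((Nat.factorial m : ℂ) / (Nat.factorial (k + m) : ℂ)) *
        ((Nat.factorial (l + k + m) : ℂ) / (Nat.factorial (k + l - j + m) : ℂ)) *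
        A ^ k * B ^ (l + k - j))
      - (∑ k ∈ Finset.range (j + 1), ((Nat.factorial m : ℂ) / (Nat.factorial (k + m) : ℂ)) *
          ((Nat.factorial (j + m) : ℂ) / (Nat.factorial (k + l - j + m) : ℂ)) *
          ((Nat.factorial (l + m) : ℂ) / (Nat.factorial (j - k + m) : ℂ)) *
          A ^ k * B ^ (l + k - j))
    = (∑ k ∈ Finset.Icc 1 (j - 1),
        (((Nat.factorial m : ℂ) / (Nat.factorial (k + m) : ℂ)) *
          ((Nat.factorial (l + k + m) : ℂ) / (Nat.factorial (k + l - j + m) : ℂ))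
          - ((Nat.factorial m : ℂ) / (Nat.factorial (k + m) : ℂ)) *
            ((Nat.factorial (j + m) : ℂ) / (Nat.factorial (k + l - j + m) : ℂ)) *
            ((Nat.factorial (l + m) : ℂ) / (Nat.factorial (j - k + m) : ℂ))) *
          A ^ k * B ^ (l + k - j))
      - ∑ i ∈ Finset.range (j - 1),
          C i * A ^ i * B ^ (l + i - j) *
            (∑ k ∈ Finset.Icc 1 (j - i - 1),
              (Nat.factorial m : ℂ) * (A * B) ^ k / (Nat.factorial (k + m) : ℂ)) := by
  have hfac : ∀ n : ℕ, ((Nat.factorial n : ℂ)) ≠ 0 :=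
    fun n => Nat.cast_ne_zero.2 (Nat.factorial_ne_zero n)
  set g : ℕ → ℂ := fun k => (Nat.factorial m : ℂ) * (A * B) ^ k / (Nat.factorial (k + m) : ℂ)
    with hgdef
  set F : ℕ → ℂ := fun k => ((Nat.factorial m : ℂ) / (Nat.factorial (k + m) : ℂ)) *
        ((Nat.factorial (l + k + m) : ℂ) / (Nat.factorial (k + l - j + m) : ℂ)) *
        A ^ k * B ^ (l + k - j) with hFdef
  set T : ℕ → ℂ := fun k => ((Nat.factorial m : ℂ) / (Nat.factorial (k + m) : ℂ)) *
          ((Nat.factorial (j + m) : ℂ) / (Nat.factorial (k + l - j + m) : ℂ)) *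
          ((Nat.factorial (l + m) : ℂ) / (Nat.factorial (j - k + m) : ℂ)) *
          A ^ k * B ^ (l + k - j) with hTdef
  have hg : Summable g := by
    by_contra h
    rw [tsum_eq_zero_of_not_summable h] at hsum
    exact one_ne_zero hsum.symm
  have hg0 : g 0 = 1 := by
    simp [hgdef, div_self (hfac m)]
  have htail : ∀ n : ℕ, ∑' k : ℕ, g (k + n) = 1 - ∑ k ∈ range n, g k := by
    intro n
    have h := Summable.sum_add_tsum_nat_add (f := g) n hg
    rw [hsum] at h
    linear_combination h
  have hCj : C j = 1 := stmt7_Cjone m j l hj C hC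
  have hFshift : ∀ k : ℕ, F (k + j)
      = ∑ i ∈ range (j+1), C i * A ^ i * B ^ (l + i - j) * g (k + (j - i)) := by
    intro k
    simp only [hFdef, hgdef]
    exact stmt7_shift m A B j l hj hl C hC k
  have hFsum : Summable F := by
    rw [← summable_nat_add_iff j]
    apply Summable.congr (f := fun k => ∑ i ∈ range (j+1),
      C i * A ^ i * B ^ (l + i - j) * g (k + (j - i)))
    · exact summable_sum fun i _ => ((summable_nat_add_iff (j - i)).2 hg).mul_left _
    · exact fun k => (hFshift k).symm
  have hsplit : ∑ k ∈ range j, F k + ∑' k : ℕ, F (k + j) = ∑' k : ℕ, F k :=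
    Summable.sum_add_tsum_nat_add j hFsum
  have htsum_shift : ∑' k : ℕ, F (k + j)
      = ∑ i ∈ range (j+1), C i * A ^ i * B ^ (l + i - j) * (1 - ∑ k ∈ range (j - i), g k) := by
    calc ∑' k : ℕ, F (k + j)
        = ∑' k : ℕ, ∑ i ∈ range (j+1), C i * A ^ i * B ^ (l + i - j) * g (k + (j - i)) :=
          tsum_congr hFshift
      _ = ∑ i ∈ range (j+1), ∑' k : ℕ, C i * A ^ i * B ^ (l + i - j) * g (k + (j - i)) :=
          Summable.tsum_finsetSum fun i _ => ((summable_nat_add_iff (j - i)).2 hg).mul_left _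
      _ = ∑ i ∈ range (j+1), C i * A ^ i * B ^ (l + i - j) * (1 - ∑ k ∈ range (j - i), g k) := by
          refine Finset.sum_congr rfl fun i _ => ?_
          rw [tsum_mul_left, htail (j - i)]
  rw [← hsplit, htsum_shift]
  -- finite algebra
  have hIco : ∀ n : ℕ, Finset.Ico 1 n = Finset.Icc 1 (n - 1) := by
    intro n
    rw [← Finset.Ico_add_one_right_eq_Icc]
    rcases Nat.eq_zero_or_pos n with h | h
    · subst h; simp
    · congr 1; omega
  have GF : ∑ k ∈ range j, F k = F 0 + ∑ k ∈ Icc 1 (j-1), F k := by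
    rw [Finset.range_eq_Ico, Finset.sum_eq_sum_Ico_succ_bot (by omega), zero_add, hIco j]
  have GT : ∑ k ∈ range (j+1), T k = T 0 + ∑ k ∈ Icc 1 (j-1), T k + T j := by
    rw [Finset.sum_range_succ, Finset.range_eq_Ico,
      Finset.sum_eq_sum_Ico_succ_bot (by omega : 0 < j), zero_add, hIco j]
  have hrange : ∀ n : ℕ, 0 < n → ∑ k ∈ range n, g k = 1 + ∑ k ∈ Icc 1 (n-1), g k := by
    intro n hn
    rw [Finset.range_eq_Ico, Finset.sum_eq_sum_Ico_succ_bot hn, zero_add, hg0, hIco n]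
  -- decompose the middle sum
  set f : ℕ → ℂ := fun i => C i * A ^ i * B ^ (l + i - j) * (1 - ∑ k ∈ range (j - i), g k)
    with hfdef
  have e : (j-1)+1 = j := by omega
  have Gf : ∑ i ∈ range (j+1), f i = ∑ i ∈ range (j-1), f i + f (j-1) + f j := by
    calc ∑ i ∈ range (j+1), f i = ∑ i ∈ range j, f i + f j := Finset.sum_range_succ f j
      _ = ∑ i ∈ range ((j-1)+1), f i + f j := by rw [e]
      _ = ∑ i ∈ range (j-1), f i + f (j-1) + f j := by rw [Finset.sum_range_succ]
  have ff1 : f (j-1) = 0 := by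
    have h1 : j - (j-1) = 1 := by omega
    simp only [hfdef, h1]
    rw [Finset.sum_range_one, hg0]
    ring
  have ffj : f j = A ^ j * B ^ l := by
    have h1 : j - j = 0 := by omega
    have h2 : l + j - j = l := by omega
    simp only [hfdef, h1, h2, hCj]
    simp
  have Gff : ∑ i ∈ range (j-1), f i
      = -∑ i ∈ range (j-1), C i * A ^ i * B ^ (l + i - j) * (∑ k ∈ Icc 1 (j-i-1), g k) := by
    rw [← Finset.sum_neg_distrib]
    refine Finset.sum_congr rfl fun i hi => ?_
    simp only [mem_range] at hi
    simp only [hfdef]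
    rw [hrange (j - i) (by omega)]
    have : j - i - 1 = j - i - 1 := rfl
    ring
  -- Q sum
  have GQ : (∑ k ∈ Finset.Icc 1 (j - 1),
        (((Nat.factorial m : ℂ) / (Nat.factorial (k + m) : ℂ)) *
          ((Nat.factorial (l + k + m) : ℂ) / (Nat.factorial (k + l - j + m) : ℂ))
          - ((Nat.factorial m : ℂ) / (Nat.factorial (k + m) : ℂ)) *
            ((Nat.factorial (j + m) : ℂ) / (Nat.factorial (k + l - j + m) : ℂ)) *
            ((Nat.factorial (l + m) : ℂ) / (Nat.factorial (j - k + m) : ℂ))) *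
          A ^ k * B ^ (l + k - j))
      = ∑ k ∈ Icc 1 (j-1), F k - ∑ k ∈ Icc 1 (j-1), T k := by
    rw [← Finset.sum_sub_distrib]
    refine Finset.sum_congr rfl fun k hk => ?_
    simp only [hFdef, hTdef]
    ring
  have G0 : F 0 = T 0 := by
    simp only [hFdef, hTdef]
    have h1 : l + 0 + m = l + m := by omega
    have h2 : j - 0 + m = j + m := by omega
    rw [h1, h2]
    field_simp
    rw [div_eq_div_iff (mul_ne_zero (hfac _) (hfac _))
      (mul_ne_zero (mul_ne_zero (hfac _) (hfac _)) (hfac _))]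
    ring
  have GTj : T j = A ^ j * B ^ l := by
    simp only [hTdef]
    have h1 : j + l - j + m = l + m := by omega
    have h2 : j - j + m = m := by omega
    have h3 : l + j - j = l := by omega
    rw [h1, h2, h3]
    have hone : (Nat.factorial m : ℂ)/(Nat.factorial (j+m) : ℂ)
        * ((Nat.factorial (j+m) : ℂ)/(Nat.factorial (l+m) : ℂ))
        * ((Nat.factorial (l+m) : ℂ)/(Nat.factorial m : ℂ)) = 1 := by
      rw [div_mul_div_comm, div_mul_div_comm,
        div_eq_one_iff_eq (mul_ne_zero (mul_ne_zero (hfac _) (hfac _)) (hfac _))]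
      ring
    linear_combination (A ^ j * B ^ l) * hone
  rw [GF, GT, Gf, ff1, ffj, Gff, GQ, G0, GTj]
  ring
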